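/- If p is a prime congruent to 3 modulo 4, m is a totient, and p does not divide any element of φ^{-1}(m), then A((p-1)·m) ≥ A(m); moreover if m ∈ 𝒱^ℓ then (p-1)·m ∈ 𝒱^{ℓ+1}. -/
import Mathlib


open Filter Topology
open scoped Classical

noncomputable section

/-- The multiplicity `A(m)`: the number of positive integers `n` with `φ(n) = m`. -/
def totA (m : ℕ) : ℕ := Set.ncard {n : ℕ | 0 < n ∧ n.totient = m}

/-- The set of totients `𝒱`. -/
def totV : Set ℕ := {m : ℕ | ∃ n : ℕ, 0 < n ∧ n.totient = m}

/-- The stratum `𝒱^ℓ` of totients congruent to `2^ℓ` mod `2^(ℓ+1)`. -/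
def totVl (ℓ : ℕ) : Set ℕ := {m ∈ totV | m % 2 ^ (ℓ + 1) = 2 ^ ℓ}

/-- `U(x)`: the number of elements of `U` not exceeding `x`. -/
def countUpTo (U : Set ℕ) (x : ℝ) : ℕ := Set.ncard {n ∈ U | (n : ℝ) ≤ x}

/-- `π(x)`: the number of primes not exceeding `x`. -/
def primePi (x : ℝ) : ℕ := Set.ncard {p : ℕ | p.Prime ∧ (p : ℝ) ≤ x}

/-- `S^ℓ(x) = Σ_{m ∈ 𝒱^ℓ, m ≤ x} A(m)`. -/
def totS (ℓ : ℕ) (x : ℝ) : ℕ :=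
  ∑ m ∈ Finset.range (⌊x⌋₊ + 1), if m ∈ totVl ℓ then totA m else 0

end

/-- For odd `m`, `m ≤ φ(m)²`. -/
lemma odd_le_totient_sq : ∀ m : ℕ, Odd m → m ≤ m.totient ^ 2 := by
  intro m
  induction m using Nat.strong_induction_on with
  | _ m ih =>
    intro hodd
    rcases Nat.lt_or_ge m 2 with h1 | h1
    · interval_cases m <;> simp
    · set q := m.minFac with hq
      have hqp : q.Prime := Nat.minFac_prime (by omega)
      have hqd : q ∣ m := Nat.minFac_dvd m
      obtain ⟨k, hk⟩ := hqd
      have hq2 : q ≠ 2 := by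
        intro h
        have : (2 : ℕ) ∣ m := h ▸ Nat.minFac_dvd m
        exact (Nat.not_even_iff_odd.mpr hodd) ((even_iff_two_dvd).mpr this)
      have hq3 : 3 ≤ q := by have := hqp.two_le; omega
      have hk0 : 0 < k := by
        rcases Nat.eq_zero_or_pos k with h | h
        · subst h; omega
        · exact h
      have hkodd : Odd k := by
        rcases Nat.even_or_odd k with h | h
        · exfalso; exact (Nat.not_even_iff_odd.mpr hodd) (hk ▸ h.mul_left q)
        · exact h
      have hklt : k < m := by nlinarith
      have hIH : k ≤ k.totient ^ 2 := ih k hklt hkodd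
      by_cases hdvd : q ∣ k
      · have hphi : m.totient = q * k.totient := by
          rw [hk]; exact Nat.totient_mul_of_prime_of_dvd hqp hdvd
        calc m = q * k := hk
          _ ≤ q * k.totient ^ 2 := Nat.mul_le_mul_left q hIH
          _ ≤ q ^ 2 * k.totient ^ 2 := by
              have : q ≤ q ^ 2 := by nlinarith
              exact Nat.mul_le_mul_right _ this
          _ = (q * k.totient) ^ 2 := by ring
          _ = m.totient ^ 2 := by rw [hphi]
      · have hphi : m.totient = (q - 1) * k.totient := by
          rw [hk]; exact Nat.totient_mul_of_prime_of_not_dvd hqp hdvd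
        have hq1 : q ≤ (q - 1) ^ 2 := by nlinarith [Nat.sub_add_cancel (by omega : 1 ≤ q)]
        calc m = q * k := hk
          _ ≤ q * k.totient ^ 2 := Nat.mul_le_mul_left q hIH
          _ ≤ (q - 1) ^ 2 * k.totient ^ 2 := Nat.mul_le_mul_right _ hq1
          _ = ((q - 1) * k.totient) ^ 2 := by ring
          _ = m.totient ^ 2 := by rw [hphi]

/-- For all `n`, `n ≤ 2 φ(n)²`. -/
lemma le_two_mul_totient_sq : ∀ n : ℕ, n ≤ 2 * n.totient ^ 2 := by
  intro n
  induction n using Nat.strong_induction_on with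
  | _ n ih =>
    rcases Nat.even_or_odd n with heven | hodd
    · rcases Nat.eq_zero_or_pos n with h | hn0
      · simp [h]
      obtain ⟨k, hk⟩ : 2 ∣ n := even_iff_two_dvd.mp heven
      have hk0 : 0 < k := by omega
      have hklt : k < n := by omega
      have hIH : k ≤ 2 * k.totient ^ 2 := ih k hklt
      by_cases hdvd : 2 ∣ k
      · have hphi : n.totient = 2 * k.totient := by
          rw [hk]; exact Nat.totient_mul_of_prime_of_dvd Nat.prime_two hdvd
        calc n = 2 * k := hk
          _ ≤ 2 * (2 * k.totient ^ 2) := Nat.mul_le_mul_left 2 hIH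
          _ ≤ 2 * (2 * k.totient) ^ 2 := by nlinarith
          _ = 2 * n.totient ^ 2 := by rw [hphi]
      · have hkodd : Odd k := Nat.odd_iff.mpr (by omega)
        have hphi : n.totient = 1 * k.totient := by
          rw [hk]; exact Nat.totient_mul_of_prime_of_not_dvd Nat.prime_two hdvd
        have := odd_le_totient_sq k hkodd
        calc n = 2 * k := hk
          _ ≤ 2 * k.totient ^ 2 := Nat.mul_le_mul_left 2 this
          _ = 2 * n.totient ^ 2 := by rw [hphi]; ring_nf
    · have := odd_le_totient_sq n hodd
      omega

/-- Totient fibers are finite. -/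
lemma totient_fiber_finite (m : ℕ) : {n : ℕ | 0 < n ∧ n.totient = m}.Finite := by
  apply Set.Finite.subset (Set.finite_Iic (2 * m ^ 2))
  rintro n ⟨hn, hφ⟩
  have := le_two_mul_totient_sq n
  rw [hφ] at this
  exact this

/-- If `p ≡ 3 (mod 4)` is prime, `m` is a totient, and `p` divides no element of
`φ⁻¹(m)`, then `A((p-1)·m) ≥ A(m)`; moreover if `m ∈ 𝒱^ℓ` then `(p-1)·m ∈ 𝒱^{ℓ+1}`. -/
theorem stmt_19 (p : ℕ) (hp : p.Prime) (hp4 : p % 4 = 3) (m : ℕ) (hm : m ∈ totV)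
    (hnd : ∀ n : ℕ, 0 < n → n.totient = m → ¬ p ∣ n) :
    totA m ≤ totA ((p - 1) * m) ∧
    (∀ ℓ : ℕ, 1 ≤ ℓ → m ∈ totVl ℓ → (p - 1) * m ∈ totVl (ℓ + 1)) := by
  have hp0 : 0 < p := hp.pos
  have hmap : ∀ n : ℕ, n ∈ {n : ℕ | 0 < n ∧ n.totient = m} →
      p * n ∈ {n : ℕ | 0 < n ∧ n.totient = (p - 1) * m} := by
    rintro n ⟨hn, hφ⟩
    refine ⟨Nat.mul_pos hp0 hn, ?_⟩
    rw [Nat.totient_mul_of_prime_of_not_dvd hp (hnd n hn hφ), hφ]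
  constructor
  · have hinj : Set.InjOn (fun n => p * n) {n : ℕ | 0 < n ∧ n.totient = m} := by
      intro a _ b _ h
      exact Nat.eq_of_mul_eq_mul_left hp0 h
    calc totA m = ((fun n => p * n) '' {n : ℕ | 0 < n ∧ n.totient = m}).ncard :=
          (Set.ncard_image_of_injOn hinj).symm
      _ ≤ totA ((p - 1) * m) := by
          apply Set.ncard_le_ncard _ (totient_fiber_finite _)
          rintro x ⟨n, hn, rfl⟩
          exact hmap n hn
  · intro ℓ _ hml
    obtain ⟨⟨n, hn, hφ⟩, hmod⟩ := hml
    constructor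
    · exact ⟨p * n, hmap n ⟨hn, hφ⟩⟩
    · -- arithmetic: p - 1 = 2 * (2s+1), m = 2^ℓ * (2q+1)
      obtain ⟨s, hs⟩ : ∃ s, p = 4 * s + 3 := ⟨p / 4, by omega⟩
      have hmq : ∃ q, m = 2 ^ (ℓ + 1) * q + 2 ^ ℓ :=
        ⟨m / 2 ^ (ℓ + 1), by
          conv_lhs => rw [← Nat.div_add_mod m (2 ^ (ℓ + 1))]
          rw [hmod]⟩
      obtain ⟨q, hq⟩ := hmq
      have key : (p - 1) * m = 2 ^ (ℓ + 2) * (2 * s * q + s + q) + 2 ^ (ℓ + 1) := by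
        have h1 : p - 1 = 4 * s + 2 := by omega
        rw [h1, hq]
        ring
      have h2 : ℓ + 1 + 1 = ℓ + 2 := rfl
      rw [key, h2, Nat.mul_add_mod]
      exact Nat.mod_eq_of_lt (Nat.pow_lt_pow_right (by norm_num) (by omega))
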